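/- In every parity game augmented with co-live edges, Player 0 has a single positional (memoryless) strategy that is winning from every vertex of her winning region of the augmented game (G, Parity(ℙ), ψ_colive(Ec)). -/

import Mathlib

universe u

/-- A two-player game graph: finite-intended vertex set `V`, an ownership function
(`owner v = 0` means `v` is a Player-0 vertex, `owner v = 1` a Player-1 vertex),
and an edge relation such that every vertex has at least one outgoing edge. -/
structure GameGraph (V : Type u) where
  owner : V → Fin 2
  E : V → V → Prop
  exists_succ : ∀ v, ∃ w, E v w

variable {V : Type u}

/-- A play of the game graph: an infinite sequence of vertices following edges. -/
def IsPlay (G : GameGraph V) (ρ : ℕ → V) : Prop :=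
  ∀ k, G.E (ρ k) (ρ (k + 1))

/-- A (history-dependent) strategy: given the list of previously visited
vertices and the current vertex, it chooses a next vertex. -/
abbrev Strategy (V : Type u) := List V → V → V

/-- A strategy of Player `i` is valid if at each Player-`i` vertex it chooses
an edge of the game graph. -/
def StratValid (G : GameGraph V) (i : Fin 2) (σ : Strategy V) : Prop :=
  ∀ (h : List V) (v : V), G.owner v = i → G.E v (σ h v)

/-- A positional (memoryless) strategy ignores the history. -/
def Positional (σ : Strategy V) : Prop :=
  ∀ (h h' : List V) (v : V), σ h v = σ h' v

/-- A play is compliant with the strategy `σ` of Player `i` (a `σ`-play) if at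
every Player-`i` vertex it moves to the vertex chosen by `σ`. -/
def Compliant (G : GameGraph V) (i : Fin 2) (σ : Strategy V) (ρ : ℕ → V) : Prop :=
  ∀ k, G.owner (ρ k) = i → ρ (k + 1) = σ (List.ofFn fun j : Fin k => ρ j.val) (ρ k)

/-- `σ` is a winning strategy for Player `i` from `v`, where `W` is the set of
plays that are winning for Player `i`. -/
def WinsFrom (G : GameGraph V) (i : Fin 2) (W : Set (ℕ → V)) (σ : Strategy V) (v : V) : Prop :=
  StratValid G i σ ∧
    ∀ ρ : ℕ → V, IsPlay G ρ → Compliant G i σ ρ → ρ 0 = v → ρ ∈ W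

/-- The winning region of Player `i`: the vertices from which Player `i` has a
winning strategy. -/
def WinRegion (G : GameGraph V) (i : Fin 2) (W : Set (ℕ → V)) : Set V :=
  {v | ∃ σ, WinsFrom G i W σ v}

/-- A vertex occurs infinitely often along a play. -/
def InfOft (ρ : ℕ → V) (v : V) : Prop := ∀ n, ∃ k, n ≤ k ∧ ρ k = v

/-- An edge is taken infinitely often along a play. -/
def EdgeInfOft (ρ : ℕ → V) (e : V × V) : Prop :=
  ∀ n, ∃ k, n ≤ k ∧ ρ k = e.1 ∧ ρ (k + 1) = e.2

/-- Parity objective: the maximal priority occurring infinitely often is even. -/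
def ParityWin (P : V → ℕ) (ρ : ℕ → V) : Prop :=
  ∃ v, InfOft ρ v ∧ Even (P v) ∧ ∀ w, InfOft ρ w → P w ≤ P v

/-- The set of source vertices of a set of edges. -/
def srcSet (H : Set (V × V)) : Set V := {u | ∃ w, (u, w) ∈ H}

/-- Strong transition co-fairness assumption: every co-live edge is taken only
finitely often. -/
def psiColive (Ec : Set (V × V)) (ρ : ℕ → V) : Prop :=
  ∀ e ∈ Ec, ¬ EdgeInfOft ρ e


namespace ZK
open Classical

variable {V : Type u}

/-- A play staying in `U`. -/
def PlayIn (G : GameGraph V) (U : Set V) (ρ : ℕ → V) : Prop :=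
  ∀ k, ρ k ∈ U ∧ G.E (ρ k) (ρ (k + 1))

/-- Compliance with a positional strategy of player `i`. -/
def PComp (G : GameGraph V) (i : Fin 2) (f : V → V) (ρ : ℕ → V) : Prop :=
  ∀ k, G.owner (ρ k) = i → ρ (k + 1) = f (ρ k)

/-- `U` is a subarena. -/
def Sub (G : GameGraph V) (U : Set V) : Prop :=
  ∀ v ∈ U, ∃ w ∈ U, G.E v w

def ValidOn (G : GameGraph V) (i : Fin 2) (U : Set V) (f : V → V) : Prop :=
  ∀ v ∈ U, G.owner v = i → f v ∈ U ∧ G.E v (f v)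

def Closed (G : GameGraph V) (i : Fin 2) (U W : Set V) (f : V → V) : Prop :=
  ∀ v ∈ W, (G.owner v = i → f v ∈ W) ∧ (G.owner v ≠ i → ∀ w ∈ U, G.E v w → w ∈ W)

def Wins (P : V → ℕ) (i : Fin 2) (ρ : ℕ → V) : Prop :=
  if i = 0 then ParityWin P ρ else ¬ ParityWin P ρ

/-- `n`-step attractor of player `i` to target `T` within `U`. -/
def attrN (G : GameGraph V) (i : Fin 2) (U T : Set V) : ℕ → Set V
  | 0 => T
  | (n + 1) => attrN G i U T n ∪
      {v ∈ U | (G.owner v = i ∧ ∃ w ∈ attrN G i U T n, G.E v w) ∨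
               (G.owner v ≠ i ∧ ∀ w ∈ U, G.E v w → w ∈ attrN G i U T n)}

def attr (G : GameGraph V) (i : Fin 2) (U T : Set V) : Set V :=
  ⋃ n, attrN G i U T n

noncomputable def rank (G : GameGraph V) (i : Fin 2) (U T : Set V) (v : V) : ℕ :=
  sInf {n | v ∈ attrN G i U T n}

variable {G : GameGraph V} {i : Fin 2} {U T : Set V} {v : V}

lemma attrN_mono_succ : ∀ n, attrN G i U T n ⊆ attrN G i U T (n + 1) := by
  intro n; exact Set.subset_union_left

lemma attrN_mono {m n : ℕ} (h : m ≤ n) : attrN G i U T m ⊆ attrN G i U T n := by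
  induction n with
  | zero => simp_all
  | succ n ih =>
    rcases Nat.lt_or_ge m (n + 1) with h' | h'
    · exact (ih (Nat.lt_succ_iff.mp h')).trans (attrN_mono_succ n)
    · have : m = n + 1 := le_antisymm h h'
      subst this; exact subset_rfl

lemma subset_attr : T ⊆ attr G i U T := fun v hv => Set.mem_iUnion.mpr ⟨0, hv⟩

lemma attrN_subset_U (hT : T ⊆ U) : ∀ n, attrN G i U T n ⊆ U := by
  intro n; induction n with
  | zero => exact hT
  | succ n ih =>
    intro v hv
    rcases hv with h | h
    · exact ih h
    · exact h.1

lemma attr_subset_U (hT : T ⊆ U) : attr G i U T ⊆ U := by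
  intro v hv; rcases Set.mem_iUnion.mp hv with ⟨n, hn⟩; exact attrN_subset_U hT n hn

lemma mem_attrN_rank (hv : v ∈ attr G i U T) : v ∈ attrN G i U T (rank G i U T v) := by
  rcases Set.mem_iUnion.mp hv with ⟨n, hn⟩
  exact Nat.sInf_mem (s := {n | v ∈ attrN G i U T n}) ⟨n, hn⟩

lemma rank_le {n : ℕ} (hn : v ∈ attrN G i U T n) : rank G i U T v ≤ n := Nat.sInf_le hn

lemma rank_eq_zero_iff (hv : v ∈ attr G i U T) : rank G i U T v = 0 ↔ v ∈ T := by
  constructor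
  · intro h; have h2 := mem_attrN_rank hv; rw [h] at h2; exact h2
  · intro h; exact Nat.le_zero.mp (rank_le (n := 0) h)

lemma finite_subset_attrN {S : Set V} (hS : S.Finite) :
    S ⊆ attr G i U T → ∃ N, S ⊆ attrN G i U T N := by
  refine Set.Finite.induction_on
    (motive := fun S _ => S ⊆ attr G i U T → ∃ N, S ⊆ attrN G i U T N) S hS
    (fun _ => ⟨0, by simp⟩) ?_
  intro a s _ _ ih h
  · 
    rcases ih (fun w hw => h (Set.mem_insert_of_mem a hw)) with ⟨N, hN⟩
    rcases Set.mem_iUnion.mp (h (Set.mem_insert a s)) with ⟨M, hM⟩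
    refine ⟨max N M, ?_⟩
    intro w hw
    rcases hw with rfl | hw
    · exact attrN_mono (le_max_right N M) hM
    · exact attrN_mono (le_max_left N M) (hN hw)

/-- Escape lemma: from outside the attractor, the opponent stays outside. -/
lemma attr_escape_i (hvU : v ∈ U) (hv : v ∉ attr G i U T) (ho : G.owner v = i) :
    ∀ w ∈ U, G.E v w → w ∉ attr G i U T := by
  intro w _ hE hw
  rcases Set.mem_iUnion.mp hw with ⟨n, hn⟩
  exact hv (Set.mem_iUnion.mpr ⟨n + 1, Or.inr ⟨hvU, Or.inl ⟨ho, ⟨w, hn, hE⟩⟩⟩⟩)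

lemma attr_escape_o [Finite V] (hU : Sub G U) (hvU : v ∈ U) (hv : v ∉ attr G i U T)
    (ho : G.owner v ≠ i) : ∃ w, w ∈ U ∧ w ∉ attr G i U T ∧ G.E v w := by
  by_contra hcon
  push_neg at hcon
  have hall : ∀ w ∈ U, G.E v w → w ∈ attr G i U T := by
    intro w hwU hE
    by_contra h'
    exact hcon w hwU h' hE
  have hsub : {w | w ∈ U ∧ G.E v w} ⊆ attr G i U T := fun w hw => hall w hw.1 hw.2
  have hfin : ({w | w ∈ U ∧ G.E v w} : Set V).Finite := Set.toFinite _
  rcases finite_subset_attrN hfin hsub with ⟨N, hN⟩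
  exact hv (Set.mem_iUnion.mpr ⟨N + 1,
    Or.inr ⟨hvU, Or.inr ⟨ho, fun w hwU hE => hN ⟨hwU, hE⟩⟩⟩⟩)

/-- The complement of an attractor is a subarena. -/
lemma sub_diff_attr [Finite V] (hU : Sub G U) : Sub G (U \ attr G i U T) := by
  intro v hv
  by_cases ho : G.owner v = i
  · rcases hU v hv.1 with ⟨w, hwU, hE⟩
    exact ⟨w, ⟨hwU, attr_escape_i hv.1 hv.2 ho w hwU hE⟩, hE⟩
  · rcases attr_escape_o hU hv.1 hv.2 ho with ⟨w, hwU, hw, hE⟩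
    exact ⟨w, ⟨hwU, hw⟩, hE⟩

/-- Step lemma inside the attractor, player-`i` vertices. -/
lemma attr_step_i (hv : v ∈ attr G i U T) (hvT : v ∉ T) (ho : G.owner v = i) :
    ∃ w, w ∈ attr G i U T ∧ G.E v w ∧ rank G i U T w < rank G i U T v := by
  have hr := mem_attrN_rank hv
  have hr0 : rank G i U T v ≠ 0 := fun h => hvT ((rank_eq_zero_iff hv).mp h)
  rcases Nat.exists_eq_succ_of_ne_zero hr0 with ⟨m, hm⟩
  rw [hm] at hr
  rcases hr with h | h
  · exact absurd (rank_le h) (by omega)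
  · rcases h.2 with ⟨_, w, hwm, hE⟩ | ⟨ho', _⟩
    · refine ⟨w, Set.mem_iUnion.mpr ⟨m, hwm⟩, hE, ?_⟩
      have := rank_le hwm; omega
    · exact absurd ho ho'

lemma attr_step_o (hv : v ∈ attr G i U T) (hvT : v ∉ T) (ho : G.owner v ≠ i) :
    ∀ w ∈ U, G.E v w → w ∈ attr G i U T ∧ rank G i U T w < rank G i U T v := by
  have hr := mem_attrN_rank hv
  have hr0 : rank G i U T v ≠ 0 := fun h => hvT ((rank_eq_zero_iff hv).mp h)
  rcases Nat.exists_eq_succ_of_ne_zero hr0 with ⟨m, hm⟩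
  rw [hm] at hr
  rcases hr with h | h
  · exact absurd (rank_le h) (by omega)
  · rcases h.2 with ⟨ho', _⟩ | ⟨_, hall⟩
    · exact absurd ho' ho
    · intro w hwU hE
      have hwm := hall w hwU hE
      refine ⟨Set.mem_iUnion.mpr ⟨m, hwm⟩, ?_⟩
      have := rank_le hwm; omega

/-- Attractor strategy. -/
noncomputable def astr (G : GameGraph V) (i : Fin 2) (U T : Set V) (v : V) : V :=
  if h : ∃ w, w ∈ attr G i U T ∧ G.E v w ∧ rank G i U T w < rank G i U T v then
    h.choose else v

lemma astr_spec (hv : v ∈ attr G i U T) (hvT : v ∉ T) (ho : G.owner v = i) :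
    astr G i U T v ∈ attr G i U T ∧ G.E v (astr G i U T v) ∧
      rank G i U T (astr G i U T v) < rank G i U T v := by
  have h := attr_step_i hv hvT ho
  rw [astr, dif_pos h]
  exact h.choose_spec

end ZK
namespace ZK
open Classical

variable {V : Type u} {G : GameGraph V} {i : Fin 2} {U T : Set V} {v : V} {P : V → ℕ}

lemma attr_reach {ρ : ℕ → V} {f : V → V} (hρ : PlayIn G U ρ) (hc : PComp G i f ρ)
    (hf : ∀ v, v ∈ attr G i U T → v ∉ T → G.owner v = i → f v = astr G i U T v) :
    ∀ r t, ρ t ∈ attr G i U T → rank G i U T (ρ t) ≤ r → ∃ t', t ≤ t' ∧ ρ t' ∈ T := by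
  intro r
  induction r with
  | zero =>
    intro t ht hr
    exact ⟨t, le_refl t, (rank_eq_zero_iff ht).mp (Nat.le_zero.mp hr)⟩
  | succ r ih =>
    intro t ht hr
    by_cases hT : ρ t ∈ T
    · exact ⟨t, le_refl t, hT⟩
    · have hnext : ρ (t + 1) ∈ attr G i U T ∧
          rank G i U T (ρ (t + 1)) < rank G i U T (ρ t) := by
        by_cases ho : G.owner (ρ t) = i
        · have hstep := astr_spec ht hT ho
          have hn : ρ (t + 1) = astr G i U T (ρ t) := by rw [hc t ho, hf _ ht hT ho]
          rw [hn]; exact ⟨hstep.1, hstep.2.2⟩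
        · exact attr_step_o ht hT ho (ρ (t + 1)) (hρ (t + 1)).1 (hρ t).2
      obtain ⟨t', ht', hT'⟩ := ih (t + 1) hnext.1 (by omega)
      exact ⟨t', by omega, hT'⟩

lemma attr_reach' {ρ : ℕ → V} {f : V → V} (hρ : PlayIn G U ρ) (hc : PComp G i f ρ)
    (hf : ∀ v, v ∈ attr G i U T → v ∉ T → G.owner v = i → f v = astr G i U T v)
    {t : ℕ} (ht : ρ t ∈ attr G i U T) : ∃ t', t ≤ t' ∧ ρ t' ∈ T :=
  attr_reach hρ hc hf _ t ht le_rfl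

lemma infOft_shift {ρ : ℕ → V} {t : ℕ} {v : V} :
    InfOft (fun s => ρ (t + s)) v ↔ InfOft ρ v := by
  constructor
  · intro h n
    obtain ⟨k, hk, he⟩ := h n
    exact ⟨t + k, by omega, he⟩
  · intro h n
    obtain ⟨k, hk, he⟩ := h (t + n)
    exact ⟨k - t, by omega, by show ρ (t + (k - t)) = v; rw [show t + (k - t) = k by omega]; exact he⟩

lemma parityWin_shift {ρ : ℕ → V} {t : ℕ} :
    ParityWin P (fun s => ρ (t + s)) ↔ ParityWin P ρ := by
  unfold ParityWin
  constructor
  · rintro ⟨v, h1, h2, h3⟩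
    exact ⟨v, infOft_shift.mp h1, h2, fun w hw => h3 w (infOft_shift.mpr hw)⟩
  · rintro ⟨v, h1, h2, h3⟩
    exact ⟨v, infOft_shift.mpr h1, h2, fun w hw => h3 w (infOft_shift.mp hw)⟩

lemma wins_shift {ρ : ℕ → V} {t : ℕ} :
    Wins P i (fun s => ρ (t + s)) ↔ Wins P i ρ := by
  unfold Wins
  split <;> simp [parityWin_shift]

lemma playIn_shift {ρ : ℕ → V} {t : ℕ} (h : PlayIn G U ρ) :
    PlayIn G U (fun s => ρ (t + s)) := by
  intro s
  refine ⟨(h (t + s)).1, ?_⟩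
  show G.E (ρ (t + s)) (ρ (t + (s + 1)))
  rw [show t + (s + 1) = (t + s) + 1 by omega]
  exact (h (t + s)).2

lemma pcomp_shift {ρ : ℕ → V} {f : V → V} {t : ℕ} (h : PComp G i f ρ) :
    PComp G i f (fun s => ρ (t + s)) := by
  intro s hs
  show ρ (t + (s + 1)) = f (ρ (t + s))
  rw [show t + (s + 1) = (t + s) + 1 by omega]
  exact h (t + s) hs

lemma exists_infOft [Finite V] {S : Set V} {ρ : ℕ → V}
    (h : ∀ n, ∃ t, n ≤ t ∧ ρ t ∈ S) : ∃ v ∈ S, InfOft ρ v := by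
  have := Fintype.ofFinite V
  by_contra hcon
  push_neg at hcon
  have hg : ∀ v : V, ∃ n : ℕ, v ∈ S → ∀ k, n ≤ k → ρ k ≠ v := by
    intro v
    by_cases hv : v ∈ S
    · have := hcon v hv
      unfold InfOft at this
      push_neg at this
      obtain ⟨n, hn⟩ := this
      exact ⟨n, fun _ k hk => hn k hk⟩
    · exact ⟨0, fun h => absurd h hv⟩
  choose g hgspec using hg
  set N := Finset.univ.sup g with hN
  obtain ⟨t, ht, htS⟩ := h N
  exact hgspec (ρ t) htS t (le_trans (Finset.le_sup (Finset.mem_univ (ρ t))) ht) rfl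

lemma mem_of_infOft {ρ : ℕ → V} {w : V} (h : InfOft ρ w) (hρ : PlayIn G U ρ) : w ∈ U := by
  obtain ⟨k, _, hk⟩ := h 0
  exact hk ▸ (hρ k).1

lemma fin2_resolve : ∀ (b a : Fin 2), a ≠ b → a = 1 - b := by decide

end ZK
namespace ZK
open Classical

variable {V : Type u} {G : GameGraph V} {U : Set V} {v : V} {P : V → ℕ}

noncomputable def dflt (G : GameGraph V) (U : Set V) (v : V) : V :=
  if h : ∃ w, w ∈ U ∧ G.E v w then h.choose else v

lemma dflt_spec (hsub : Sub G U) (hv : v ∈ U) :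
    dflt G U v ∈ U ∧ G.E v (dflt G U v) := by
  have h : ∃ w, w ∈ U ∧ G.E v w := by
    obtain ⟨w, hw, hE⟩ := hsub v hv
    exact ⟨w, hw, hE⟩
  rw [dflt, dif_pos h]
  exact h.choose_spec

lemma stay {ρ : ℕ → V} {Z : Set V} (step : ∀ s, ρ s ∈ Z → ρ (s + 1) ∈ Z)
    (h0 : ρ 0 ∈ Z) : ∀ s, ρ s ∈ Z := by
  intro s
  induction s with
  | zero => exact h0
  | succ s ih => exact step s ih

lemma fin2_union {α : Type*} (S : Fin 2 → Set α) (i : Fin 2) :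
    S 0 ∪ S 1 = S i ∪ S (1 - i) := by
  fin_cases i
  · rfl
  · exact Set.union_comm _ _

lemma fin2_resolve' : ∀ (b a : Fin 2), a ≠ 1 - b → a = b := by decide

lemma fin2_sub_ne : ∀ b : Fin 2, 1 - b ≠ b := by decide

theorem zielonka [Finite V] (G : GameGraph V) (P : V → ℕ) :
    ∀ (n : ℕ) (U : Set V), U.ncard ≤ n → Sub G U →
    ∃ (W : Fin 2 → Set V) (f : Fin 2 → V → V),
      W 0 ∪ W 1 = U ∧
      (∀ a, ValidOn G a U (f a)) ∧
      (∀ a, Closed G a U (W a) (f a)) ∧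
      (∀ a ρ, PlayIn G U ρ → PComp G a (f a) ρ → ρ 0 ∈ W a → Wins P a ρ) := by
  intro n
  induction n with
  | zero =>
    intro U hcard hsub
    have hU : U = ∅ := (Set.ncard_eq_zero (Set.toFinite U)).mp (Nat.le_zero.mp hcard)
    refine ⟨fun _ => ∅, fun _ => id, by simp [hU], ?_, ?_, ?_⟩
    · intro a v hv; rw [hU] at hv; exact absurd hv (Set.notMem_empty v)
    · intro a v hv; exact absurd hv (Set.notMem_empty v)
    · intro a ρ _ _ h0; exact absurd h0 (Set.notMem_empty _)
  | succ n ih =>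
    intro U hcard hsub
    by_cases hUe : U = ∅
    · refine ⟨fun _ => ∅, fun _ => id, by simp [hUe], ?_, ?_, ?_⟩
      · intro a v hv; rw [hUe] at hv; exact absurd hv (Set.notMem_empty v)
      · intro a v hv; exact absurd hv (Set.notMem_empty v)
      · intro a ρ _ _ h0; exact absurd h0 (Set.notMem_empty _)
    obtain ⟨m, hmU, hmax⟩ := Set.exists_max_image U P (Set.toFinite U)
      (Set.nonempty_iff_ne_empty.mpr hUe)
    set p := P m with hp
    set i : Fin 2 := if Even p then 0 else 1 with hi
    set j : Fin 2 := 1 - i with hj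
    have hji : j ≠ i := fin2_sub_ne i
    have hresi : ∀ a : Fin 2, a ≠ i → a = j := fun a ha => fin2_resolve i a ha
    have hresj : ∀ a : Fin 2, a ≠ j → a = i := fun a ha => fin2_resolve' i a ha
    have hpar : (i = 0 ∧ Even p) ∨ (i = 1 ∧ ¬ Even p) := by
      by_cases h : Even p
      · exact Or.inl ⟨by rw [hi, if_pos h], h⟩
      · exact Or.inr ⟨by rw [hi, if_neg h], h⟩
    set N : Set V := {v | v ∈ U ∧ P v = p} with hN
    have hNU : N ⊆ U := fun v hv => hv.1
    have hmN : m ∈ N := ⟨hmU, rfl⟩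
    set A := attr G i U N with hA
    have hAU : A ⊆ U := attr_subset_U hNU
    set U' := U \ A with hU'
    have hsubU' : Sub G U' := sub_diff_attr hsub
    have hcard' : U'.ncard ≤ n := by
      have hss : U' ⊂ U := by
        constructor
        · exact Set.diff_subset
        · intro hUsub
          exact (hUsub hmU).2 (subset_attr hmN)
      have := Set.ncard_lt_ncard hss (Set.toFinite U)
      omega
    obtain ⟨X, gX, hXcover, hXvalid, hXclosed, hXwin⟩ := ih U' hcard' hsubU'
    have hXcov2 : X i ∪ X j = U' := by rw [← fin2_union X i, hXcover]
    have hXiU' : X i ⊆ U' := hXcov2 ▸ Set.subset_union_left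
    have hXjU' : X j ⊆ U' := hXcov2 ▸ Set.subset_union_right
    -- key winning fact when N is visited infinitely often
    have winsN : ∀ ρ : ℕ → V, PlayIn G U ρ → (∃ v ∈ N, InfOft ρ v) → Wins P i ρ := by
      rintro ρ hplay ⟨v, ⟨hvU, hvp⟩, hio⟩
      rcases hpar with ⟨hi0, hev⟩ | ⟨hi1, hod⟩
      · rw [Wins, hi0, if_pos rfl]
        exact ⟨v, hio, by rw [hvp]; exact hev,
          fun w hw => by rw [hvp]; exact hmax w (mem_of_infOft hw hplay)⟩
      · rw [Wins, hi1, if_neg (by decide)]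
        rintro ⟨x, hx, hxe, hxmax⟩
        have hxU := mem_of_infOft hx hplay
        have h1 : P x ≤ p := hmax x hxU
        have h2 : P v ≤ P x := hxmax v hio
        have h3 : P x = p := by omega
        exact hod (h3 ▸ hxe)
    by_cases hXj : X j = ∅
    -- CASE A : the opponent's region in the subgame U' is empty; player i wins everywhere
    · have hXi : U' = X i := by rw [← hXcov2, hXj, Set.union_empty]
      set fi : V → V := fun v =>
        if v ∈ U' then gX i v else if v ∈ A ∧ v ∉ N then astr G i U N v else dflt G U v
        with hfi
      have hfiv : ValidOn G i U fi := by
        intro v hv ho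
        simp only [hfi]
        by_cases h1 : v ∈ U'
        · rw [if_pos h1]
          exact ⟨Set.diff_subset ((hXvalid i v h1 ho).1), (hXvalid i v h1 ho).2⟩
        · rw [if_neg h1]
          by_cases h2 : v ∈ A ∧ v ∉ N
          · rw [if_pos h2]
            have hsp := astr_spec (T := N) h2.1 h2.2 ho
            exact ⟨hAU hsp.1, hsp.2.1⟩
          · rw [if_neg h2]
            exact dflt_spec hsub hv
      refine ⟨fun a => if a = i then U else ∅,
        (fun a => if a = i then fi else dflt G U), ?_, ?_, ?_, ?_⟩
      · rw [fin2_union (fun a => if a = i then U else ∅) i, ← hj]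
        simp [hji]
      · -- validity
        intro a
        by_cases ha : a = i
        · simp only [ha, if_pos rfl]
          exact hfiv
        · simp only [if_neg ha]
          intro v hv _
          exact dflt_spec hsub hv
      · -- closure
        intro a
        by_cases ha : a = i
        · simp only [ha, if_pos rfl]
          intro v hv
          exact ⟨fun ho => (hfiv v hv ho).1, fun _ w hw _ => hw⟩
        · simp only [if_neg ha]
          intro v hv
          exact absurd hv (Set.notMem_empty v)
      · -- winning
        intro a ρ hplay hcomp h0
        by_cases ha : a = i
        · rw [ha] at hcomp h0 ⊢
          replace hcomp : PComp G i fi ρ := by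
            intro k hk
            rw [hcomp k hk]
            show (if i = i then fi else dflt G U) (ρ k) = fi (ρ k)
            rw [if_pos rfl]
          by_cases hNio : ∀ n, ∃ t, n ≤ t ∧ ρ t ∈ N
          · exact winsN ρ hplay (exists_infOft hNio)
          · push_neg at hNio
            obtain ⟨n₀, hn₀⟩ := hNio
            have hfattr : ∀ v, v ∈ attr G i U N → v ∉ N → G.owner v = i →
                fi v = astr G i U N v := by
              intro v hv hvN ho
              simp only [hfi]
              rw [if_neg (fun h : v ∈ U' => h.2 hv), if_pos ⟨hv, hvN⟩]
            have hnoA : ∀ t, n₀ ≤ t → ρ t ∉ A := by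
              intro t ht hA'
              obtain ⟨t', ht', hT⟩ := attr_reach' hplay hcomp hfattr hA'
              exact hn₀ t' (le_trans ht ht') hT
            have htail : ∀ s, ρ (n₀ + s) ∈ X i := by
              intro s
              rw [← hXi]
              exact ⟨(hplay _).1, hnoA _ (by omega)⟩
            have htail' : ∀ s, ρ (n₀ + s) ∈ U' := by
              intro s; rw [hXi]; exact htail s
            have h1 : PlayIn G U' (fun s => ρ (n₀ + s)) := by
              intro s
              refine ⟨htail' s, ?_⟩
              show G.E _ (ρ (n₀ + (s + 1)))
              rw [show n₀ + (s + 1) = (n₀ + s) + 1 by omega]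
              exact (hplay (n₀ + s)).2
            have h2 : PComp G i (gX i) (fun s => ρ (n₀ + s)) := by
              intro s hs
              show ρ (n₀ + (s + 1)) = _
              rw [show n₀ + (s + 1) = (n₀ + s) + 1 by omega, hcomp (n₀ + s) hs]
              simp only [hfi]
              rw [if_pos (htail' s)]
            exact wins_shift.mp (hXwin i _ h1 h2 (htail 0))
        · simp only [if_neg ha] at h0
          exact absurd h0 (Set.notMem_empty _)
    · -- CASE B : the opponent's subgame region is nonempty
      have hXjne : (X j).Nonempty := Set.nonempty_iff_ne_empty.mpr hXj
      have hXjU : X j ⊆ U := fun v hv => (hXjU' hv).1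
      set B := attr G j U (X j) with hB
      have hXjB : X j ⊆ B := subset_attr
      have hBU : B ⊆ U := attr_subset_U hXjU
      set U'' := U \ B with hU''
      have hsubU'' : Sub G U'' := sub_diff_attr hsub
      have hcard'' : U''.ncard ≤ n := by
        obtain ⟨x, hx⟩ := hXjne
        have hss : U'' ⊂ U := by
          constructor
          · exact Set.diff_subset
          · intro hUsub
            exact (hUsub (hXjU hx)).2 (subset_attr hx)
        have := Set.ncard_lt_ncard hss (Set.toFinite U)
        omega
      obtain ⟨Y, gY, hYcover, hYvalid, hYclosed, hYwin⟩ := ih U'' hcard'' hsubU''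
      have hYcov2 : Y i ∪ Y j = U'' := by rw [← fin2_union Y i, hYcover]
      have hYiU'' : Y i ⊆ U'' := hYcov2 ▸ Set.subset_union_left
      have hYjU'' : Y j ⊆ U'' := hYcov2 ▸ Set.subset_union_right
      set fi2 : V → V := fun v => if v ∈ U'' then gY i v else dflt G U v with hfi2
      set fj2 : V → V := fun v =>
        if v ∈ X j then gX j v else if v ∈ B then astr G j U (X j) v
        else if v ∈ U'' then gY j v else dflt G U v with hfj2
      have hfiv : ValidOn G i U fi2 := by
        intro v hv ho
        simp only [hfi2]
        by_cases h1 : v ∈ U''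
        · rw [if_pos h1]
          exact ⟨Set.diff_subset ((hYvalid i v h1 ho).1), (hYvalid i v h1 ho).2⟩
        · rw [if_neg h1]
          exact dflt_spec hsub hv
      have hfjv : ValidOn G j U fj2 := by
        intro v hv ho
        simp only [hfj2]
        by_cases h1 : v ∈ X j
        · rw [if_pos h1]
          exact ⟨Set.diff_subset ((hXvalid j v (hXjU' h1) ho).1),
            (hXvalid j v (hXjU' h1) ho).2⟩
        · rw [if_neg h1]
          by_cases h2 : v ∈ B
          · rw [if_pos h2]
            have hsp := astr_spec (T := X j) h2 h1 ho
            exact ⟨hBU hsp.1, hsp.2.1⟩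
          · rw [if_neg h2]
            by_cases h3 : v ∈ U''
            · rw [if_pos h3]
              exact ⟨Set.diff_subset ((hYvalid j v h3 ho).1), (hYvalid j v h3 ho).2⟩
            · rw [if_neg h3]
              exact dflt_spec hsub hv
      have hclosedYi : Closed G i U (Y i) fi2 := by
        intro v hv
        constructor
        · intro ho
          simp only [hfi2]
          rw [if_pos (hYiU'' hv)]
          exact ((hYclosed i) v hv).1 ho
        · intro ho w hwU hE
          have hoj : G.owner v = j := hresi _ ho
          have hwB : w ∉ B := attr_escape_i (hYiU'' hv).1 (hYiU'' hv).2 hoj w hwU hE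
          exact ((hYclosed i) v hv).2 ho w ⟨hwU, hwB⟩ hE
      have hclosedWj : Closed G j U (Y j ∪ B) fj2 := by
        intro v hv
        constructor
        · intro ho
          simp only [hfj2]
          by_cases h1 : v ∈ X j
          · rw [if_pos h1]
            exact Or.inr (hXjB (((hXclosed j) v h1).1 ho))
          · rw [if_neg h1]
            by_cases h2 : v ∈ B
            · rw [if_pos h2]
              exact Or.inr (astr_spec (T := X j) h2 h1 ho).1
            · rw [if_neg h2]
              have hvY : v ∈ Y j := hv.resolve_right h2
              rw [if_pos (hYjU'' hvY)]
              exact Or.inl ((hYclosed j v hvY).1 ho)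
        · intro ho w hwU hE
          have hoi : G.owner v = i := hresj _ ho
          by_cases h2 : v ∈ B
          · by_cases h1 : v ∈ X j
            · have hvU' : v ∈ U' := hXjU' h1
              have hwA : w ∉ A := attr_escape_i hvU'.1 hvU'.2 hoi w hwU hE
              exact Or.inr (hXjB ((hXclosed j v h1).2 ho w ⟨hwU, hwA⟩ hE))
            · exact Or.inr (attr_step_o (T := X j) h2 h1 ho w hwU hE).1
          · have hvY : v ∈ Y j := hv.resolve_right h2
            by_cases hwB : w ∈ B
            · exact Or.inr hwB
            · exact Or.inl ((hYclosed j v hvY).2 ho w ⟨hwU, hwB⟩ hE)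
      have winYi : ∀ ρ : ℕ → V, PlayIn G U ρ → PComp G i fi2 ρ → ρ 0 ∈ Y i → Wins P i ρ := by
        intro ρ hplay hcomp h0
        have hstay : ∀ s, ρ s ∈ Y i := by
          refine stay ?_ h0
          intro s hs
          by_cases ho : G.owner (ρ s) = i
          · rw [hcomp s ho]
            exact (hclosedYi _ hs).1 ho
          · exact (hclosedYi _ hs).2 ho _ (hplay (s + 1)).1 (hplay s).2
        have hplay'' : PlayIn G U'' ρ := fun s => ⟨hYiU'' (hstay s), (hplay s).2⟩
        have hcomp'' : PComp G i (gY i) ρ := by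
          intro s hs
          rw [hcomp s hs]
          simp only [hfi2]
          rw [if_pos (hYiU'' (hstay s))]
        exact hYwin i ρ hplay'' hcomp'' h0
      have winWj : ∀ ρ : ℕ → V, PlayIn G U ρ → PComp G j fj2 ρ → ρ 0 ∈ Y j ∪ B →
          Wins P j ρ := by
        intro ρ hplay hcomp h0
        by_cases hBvis : ∃ t, ρ t ∈ B
        · obtain ⟨t, htB⟩ := hBvis
          have hfattr : ∀ v, v ∈ attr G j U (X j) → v ∉ X j → G.owner v = j →
              fj2 v = astr G j U (X j) v := by
            intro v hvB hvX _
            simp only [hfj2]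
            rw [if_neg hvX, if_pos hvB]
          obtain ⟨t', _, htX⟩ := attr_reach' hplay hcomp hfattr htB
          have hstayX : ∀ s, ρ (t' + s) ∈ X j := by
            have step : ∀ s, ρ s ∈ X j → ρ (s + 1) ∈ X j := by
              intro s hs
              by_cases ho : G.owner (ρ s) = j
              · rw [hcomp s ho]
                simp only [hfj2]
                rw [if_pos hs]
                exact (hXclosed j _ hs).1 ho
              · have hoi : G.owner (ρ s) = i := hresj _ ho
                have hvU' : ρ s ∈ U' := hXjU' hs
                have hwA : ρ (s + 1) ∉ A :=
                  attr_escape_i hvU'.1 hvU'.2 hoi _ (hplay (s + 1)).1 (hplay s).2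
                exact (hXclosed j _ hs).2 ho _ ⟨(hplay (s + 1)).1, hwA⟩ (hplay s).2
            intro s
            induction s with
            | zero => simpa using htX
            | succ s ihs =>
              rw [show t' + (s + 1) = (t' + s) + 1 by omega]
              exact step _ ihs
          have h1 : PlayIn G U' (fun s => ρ (t' + s)) := by
            intro s
            refine ⟨hXjU' (hstayX s), ?_⟩
            show G.E _ (ρ (t' + (s + 1)))
            rw [show t' + (s + 1) = (t' + s) + 1 by omega]
            exact (hplay (t' + s)).2
          have h2 : PComp G j (gX j) (fun s => ρ (t' + s)) := by
            intro s hs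
            show ρ (t' + (s + 1)) = _
            rw [show t' + (s + 1) = (t' + s) + 1 by omega, hcomp (t' + s) hs]
            simp only [hfj2]
            rw [if_pos (hstayX s)]
          exact wins_shift.mp (hXwin j _ h1 h2 (hstayX 0))
        · push_neg at hBvis
          have h0Y : ρ 0 ∈ Y j := h0.resolve_right (hBvis 0)
          have hstayY : ∀ s, ρ s ∈ Y j := by
            refine stay ?_ h0Y
            intro s hs
            by_cases ho : G.owner (ρ s) = j
            · rw [hcomp s ho]
              simp only [hfj2]
              rw [if_neg (fun h => hBvis s (hXjB h)), if_neg (hBvis s),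
                if_pos (hYjU'' hs)]
              exact (hYclosed j _ hs).1 ho
            · exact (hYclosed j _ hs).2 ho _ ⟨(hplay (s + 1)).1, hBvis (s + 1)⟩ (hplay s).2
          have hplay'' : PlayIn G U'' ρ := fun s => ⟨hYjU'' (hstayY s), (hplay s).2⟩
          have hcomp'' : PComp G j (gY j) ρ := by
            intro s hs
            rw [hcomp s hs]
            simp only [hfj2]
            rw [if_neg (fun h => hBvis s (hXjB h)), if_neg (hBvis s),
              if_pos (hYjU'' (hstayY s))]
          exact hYwin j ρ hplay'' hcomp'' h0Y
      refine ⟨fun a => if a = i then Y i else Y j ∪ B,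
        fun a => if a = i then fi2 else fj2, ?_, ?_, ?_, ?_⟩
      · rw [fin2_union (fun a => if a = i then Y i else Y j ∪ B) i, ← hj]
        simp only [if_pos rfl, if_neg hji, if_true]
        rw [← Set.union_assoc, hYcov2, Set.diff_union_of_subset hBU]
      · intro a
        by_cases ha : a = i
        · simp only [ha, if_pos rfl]
          exact hfiv
        · simp only [if_neg ha]
          rw [hresi a ha]
          exact hfjv
      · intro a
        by_cases ha : a = i
        · simp only [ha, if_pos rfl]
          exact hclosedYi
        · simp only [if_neg ha]
          rw [hresi a ha]
          exact hclosedWj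
      · intro a ρ hplay hcomp h0
        by_cases ha : a = i
        · rw [ha] at hcomp h0 ⊢
          replace hcomp : PComp G i fi2 ρ := by
            intro k hk
            rw [hcomp k hk]
            show (if i = i then fi2 else fj2) (ρ k) = fi2 (ρ k)
            rw [if_pos rfl]
          simp only [if_pos rfl] at h0
          exact winYi ρ hplay hcomp h0
        · have haj : a = j := hresi a ha
          rw [haj] at hcomp h0 ⊢
          replace hcomp : PComp G j fj2 ρ := by
            intro k hk
            rw [hcomp k hk]
            show (if j = i then fi2 else fj2) (ρ k) = fj2 (ρ k)
            rw [if_neg hji]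
          simp only [if_neg hji] at h0
          exact winWj ρ hplay hcomp h0


end ZK
namespace ZK
open Classical

variable {V : Type u}

lemma wins_zero {P : V → ℕ} {ρ : ℕ → V} : Wins P 0 ρ ↔ ParityWin P ρ := by
  rw [Wins, if_pos rfl]

lemma wins_one {P : V → ℕ} {ρ : ℕ → V} : Wins P 1 ρ ↔ ¬ ParityWin P ρ := by
  rw [Wins, if_neg (by decide)]

/-- The augmented game graph obtained by subdividing each co-live edge. -/
noncomputable def Gaug (G : GameGraph V) (Ec : Set (V × V)) : GameGraph (V ⊕ V × V) where
  owner := fun x => match x with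
    | .inl v => G.owner v
    | .inr _ => 1
  E := fun x y => match x, y with
    | .inl u, .inl w => G.E u w ∧ (u, w) ∉ Ec
    | .inl u, .inr e => e.1 = u ∧ e ∈ Ec ∧ G.E e.1 e.2
    | .inr e, .inl w => w = e.2
    | .inr _, .inr _ => False
  exists_succ := by
    intro x
    match x with
    | .inl u =>
      obtain ⟨w, hw⟩ := G.exists_succ u
      by_cases h : (u, w) ∈ Ec
      · exact ⟨.inr (u, w), rfl, h, hw⟩
      · exact ⟨.inl w, hw, h⟩
    | .inr e => exact ⟨.inl e.2, rfl⟩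

/-- Priorities in the augmented game. -/
noncomputable def Paug (d : ℕ) (P : V → ℕ) (Ec : Set (V × V)) : (V ⊕ V × V) → ℕ :=
  fun x => match x with
    | .inl v => P v
    | .inr e => if e ∈ Ec then 2 * d + 2 else 0

variable {Ec : Set (V × V)}

/-- Translated time of position `k`. -/
noncomputable def tr (Ec : Set (V × V)) (ρ : ℕ → V) : ℕ → ℕ
  | 0 => 0
  | k + 1 => tr Ec ρ k + (if (ρ k, ρ (k + 1)) ∈ Ec then 2 else 1)

lemma tr_lt {ρ : ℕ → V} (k : ℕ) : tr Ec ρ k < tr Ec ρ (k + 1) := by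
  rw [tr]
  split <;> omega

lemma tr_mono {ρ : ℕ → V} {k l : ℕ} (h : k ≤ l) : tr Ec ρ k ≤ tr Ec ρ l := by
  induction l with
  | zero => simp_all
  | succ l ih =>
    rcases Nat.lt_or_ge k (l + 1) with h' | h'
    · exact le_trans (ih (by omega)) (le_of_lt (tr_lt l))
    · have : k = l + 1 := by omega
      subst this; rfl

lemma tr_strictMono {ρ : ℕ → V} {k l : ℕ} (h : k < l) : tr Ec ρ k < tr Ec ρ l :=
  lt_of_lt_of_le (tr_lt k) (tr_mono h)

lemma tr_ge {ρ : ℕ → V} (k : ℕ) : k ≤ tr Ec ρ k := by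
  induction k with
  | zero => simp [tr]
  | succ k ih => have := tr_lt (Ec := Ec) (ρ := ρ) k; omega

noncomputable def idx (Ec : Set (V × V)) (ρ : ℕ → V) (n : ℕ) : ℕ :=
  Nat.findGreatest (fun k => tr Ec ρ k ≤ n) n

lemma idx_spec {ρ : ℕ → V} (n : ℕ) :
    tr Ec ρ (idx Ec ρ n) ≤ n ∧ n < tr Ec ρ (idx Ec ρ n + 1) := by
  constructor
  · exact Nat.findGreatest_spec (P := fun k => tr Ec ρ k ≤ n) (m := 0) (Nat.zero_le n) (Nat.zero_le n)
  · by_contra h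
    push_neg at h
    have h1 : idx Ec ρ n + 1 ≤ n := le_trans (tr_ge _) h
    exact Nat.findGreatest_is_greatest (Nat.lt_succ_self _) h1 h

lemma idx_tr {ρ : ℕ → V} (k : ℕ) : idx Ec ρ (tr Ec ρ k) = k := by
  have h1 : k ≤ idx Ec ρ (tr Ec ρ k) :=
    Nat.le_findGreatest (tr_ge k) (le_refl _)
  have h2 := (idx_spec (Ec := Ec) (ρ := ρ) (tr Ec ρ k)).1
  by_contra h
  have hlt : k < idx Ec ρ (tr Ec ρ k) := by omega
  exact absurd h2 (by simpa using tr_strictMono (Ec := Ec) (ρ := ρ) hlt)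

lemma idx_tr_succ {ρ : ℕ → V} (k : ℕ) (hc : (ρ k, ρ (k + 1)) ∈ Ec) :
    idx Ec ρ (tr Ec ρ k + 1) = k := by
  have htr : tr Ec ρ (k + 1) = tr Ec ρ k + 2 := by rw [tr, if_pos hc]
  have h1 : k ≤ idx Ec ρ (tr Ec ρ k + 1) :=
    Nat.le_findGreatest (by have := tr_ge (Ec := Ec) (ρ := ρ) k; omega) (by omega)
  have h2 := (idx_spec (Ec := Ec) (ρ := ρ) (tr Ec ρ k + 1)).1
  by_contra h
  have hlt : k + 1 ≤ idx Ec ρ (tr Ec ρ k + 1) := by omega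
  have := tr_mono (Ec := Ec) (ρ := ρ) hlt
  omega

/-- Lift a play of `G` to a play of the augmented game. -/
noncomputable def liftPlay (Ec : Set (V × V)) (ρ : ℕ → V) (n : ℕ) : V ⊕ V × V :=
  if tr Ec ρ (idx Ec ρ n) = n then .inl (ρ (idx Ec ρ n))
  else .inr (ρ (idx Ec ρ n), ρ (idx Ec ρ n + 1))

lemma liftPlay_tr {ρ : ℕ → V} (k : ℕ) : liftPlay Ec ρ (tr Ec ρ k) = .inl (ρ k) := by
  rw [liftPlay, idx_tr, if_pos rfl]

lemma liftPlay_tr_succ {ρ : ℕ → V} (k : ℕ) (hc : (ρ k, ρ (k + 1)) ∈ Ec) :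
    liftPlay Ec ρ (tr Ec ρ k + 1) = .inr (ρ k, ρ (k + 1)) := by
  rw [liftPlay, idx_tr_succ k hc, if_neg (by omega)]

lemma liftPlay_cases {ρ : ℕ → V} (n : ℕ) :
    (∃ k, n = tr Ec ρ k) ∨
    (∃ k, (ρ k, ρ (k + 1)) ∈ Ec ∧ n = tr Ec ρ k + 1) := by
  obtain ⟨h1, h2⟩ := idx_spec (Ec := Ec) (ρ := ρ) n
  set k := idx Ec ρ n with hk
  by_cases h : tr Ec ρ k = n
  · exact Or.inl ⟨k, h.symm⟩
  · right
    refine ⟨k, ?_, ?_⟩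
    · by_contra hc
      have : tr Ec ρ (k + 1) = tr Ec ρ k + 1 := by rw [tr, if_neg hc]
      omega
    · by_cases hc : (ρ k, ρ (k + 1)) ∈ Ec
      · have : tr Ec ρ (k + 1) = tr Ec ρ k + 2 := by rw [tr, if_pos hc]
        omega
      · have : tr Ec ρ (k + 1) = tr Ec ρ k + 1 := by rw [tr, if_neg hc]
        omega

lemma liftPlay_eq_inl {ρ : ℕ → V} {n : ℕ} {x : V} (h : liftPlay Ec ρ n = .inl x) :
    ∃ k, n = tr Ec ρ k ∧ ρ k = x := by
  rcases liftPlay_cases (Ec := Ec) (ρ := ρ) n with ⟨k, hk⟩ | ⟨k, hc, hk⟩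
  · subst hk
    rw [liftPlay_tr] at h
    exact ⟨k, rfl, Sum.inl.inj h⟩
  · subst hk
    rw [liftPlay_tr_succ k hc] at h
    exact absurd h (by simp)

lemma liftPlay_eq_inr {ρ : ℕ → V} {n : ℕ} {e : V × V} (h : liftPlay Ec ρ n = .inr e) :
    ∃ k, n = tr Ec ρ k + 1 ∧ (ρ k, ρ (k + 1)) ∈ Ec ∧ e = (ρ k, ρ (k + 1)) := by
  rcases liftPlay_cases (Ec := Ec) (ρ := ρ) n with ⟨k, hk⟩ | ⟨k, hc, hk⟩
  · subst hk
    rw [liftPlay_tr] at h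
    exact absurd h (by simp)
  · subst hk
    rw [liftPlay_tr_succ k hc] at h
    exact ⟨k, rfl, hc, (Sum.inr.inj h).symm⟩

lemma infOft_liftPlay_inl {ρ : ℕ → V} {x : V} :
    InfOft (liftPlay Ec ρ) (.inl x) ↔ InfOft ρ x := by
  constructor
  · intro h n
    obtain ⟨m, hm, hval⟩ := h (tr Ec ρ n)
    obtain ⟨k, hk, hkx⟩ := liftPlay_eq_inl hval
    refine ⟨k, ?_, hkx⟩
    by_contra hlt
    have := tr_strictMono (Ec := Ec) (ρ := ρ) (show k < n by omega)
    omega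
  · intro h n
    obtain ⟨k, hk, hkx⟩ := h n
    exact ⟨tr Ec ρ k, le_trans hk (tr_ge k), by rw [liftPlay_tr, hkx]⟩

lemma infOft_liftPlay_inr {ρ : ℕ → V} {e : V × V} :
    InfOft (liftPlay Ec ρ) (.inr e) ↔ (e ∈ Ec ∧ EdgeInfOft ρ e) := by
  constructor
  · intro h
    obtain ⟨m₀, _, hval₀⟩ := h 0
    obtain ⟨k₀, _, hc₀, he₀⟩ := liftPlay_eq_inr hval₀
    refine ⟨he₀ ▸ hc₀, ?_⟩
    intro n
    obtain ⟨m, hm, hval⟩ := h (tr Ec ρ n + 1)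
    obtain ⟨k, hk, hc, he⟩ := liftPlay_eq_inr hval
    refine ⟨k, ?_, by rw [he], by rw [he]⟩
    by_contra hlt
    have := tr_strictMono (Ec := Ec) (ρ := ρ) (show k < n by omega)
    omega
  · rintro ⟨hEc, h⟩ n
    obtain ⟨k, hk, h1, h2⟩ := h n
    have hc : (ρ k, ρ (k + 1)) ∈ Ec := by rw [h1, h2]; simpa using hEc
    refine ⟨tr Ec ρ k + 1, by have := tr_ge (Ec := Ec) (ρ := ρ) k; omega, ?_⟩
    rw [liftPlay_tr_succ k hc, h1, h2]

lemma liftPlay_isPlay {G : GameGraph V} {ρ : ℕ → V} (h : IsPlay G ρ) :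
    IsPlay (Gaug G Ec) (liftPlay Ec ρ) := by
  intro n
  rcases liftPlay_cases (Ec := Ec) (ρ := ρ) n with ⟨k, hk⟩ | ⟨k, hc, hk⟩
  · subst hk
    rw [liftPlay_tr]
    by_cases hck : (ρ k, ρ (k + 1)) ∈ Ec
    · rw [show tr Ec ρ k + 1 = tr Ec ρ k + 1 from rfl, liftPlay_tr_succ k hck]
      exact ⟨rfl, hck, h k⟩
    · have htr : tr Ec ρ k + 1 = tr Ec ρ (k + 1) := by rw [tr, if_neg hck]
      rw [htr, liftPlay_tr]
      exact ⟨h k, hck⟩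
  · subst hk
    rw [liftPlay_tr_succ k hc]
    have htr : tr Ec ρ k + 1 + 1 = tr Ec ρ (k + 1) := by rw [tr, if_pos hc]
    rw [htr, liftPlay_tr]
    exact rfl

end ZK
namespace ZK
open Classical

variable {V : Type u}

/-- The play arising from Player 0 using strategy `σ` and Player 1 using
positional strategy `g`, as (history, current vertex) pairs. -/
noncomputable def duelH (G : GameGraph V) (σ : Strategy V) (g : V → V) (v : V) :
    ℕ → List V × V
  | 0 => ([], v)
  | k + 1 =>
    ((duelH G σ g v k).1 ++ [(duelH G σ g v k).2],
      if G.owner (duelH G σ g v k).2 = 0 then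
        σ (duelH G σ g v k).1 (duelH G σ g v k).2
      else g (duelH G σ g v k).2)

noncomputable def duel (G : GameGraph V) (σ : Strategy V) (g : V → V) (v : V)
    (k : ℕ) : V := (duelH G σ g v k).2

variable {G : GameGraph V} {σ : Strategy V} {g : V → V} {v : V}

lemma duel_zero : duel G σ g v 0 = v := rfl

lemma duel_succ (k : ℕ) : duel G σ g v (k + 1) =
    if G.owner (duel G σ g v k) = 0 then
      σ (duelH G σ g v k).1 (duel G σ g v k)
    else g (duel G σ g v k) := rfl

lemma duelH_fst (k : ℕ) :
    (duelH G σ g v k).1 = List.ofFn (fun j : Fin k => duel G σ g v j.val) := by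
  induction k with
  | zero => rfl
  | succ k ih =>
    show (duelH G σ g v k).1 ++ [duel G σ g v k] = _
    rw [ih, List.ofFn_succ']
    simp [List.concat_eq_append]

lemma fin2_ne_zero : ∀ a : Fin 2, a ≠ 0 → a = 1 := by decide

lemma duel_isPlay (hσ : StratValid G 0 σ)
    (hg : ∀ u, G.owner u = 1 → G.E u (g u)) : IsPlay G (duel G σ g v) := by
  intro k
  rw [duel_succ]
  by_cases ho : G.owner (duel G σ g v k) = 0
  · rw [if_pos ho]
    exact hσ _ _ ho
  · rw [if_neg ho]
    exact hg _ (fin2_ne_zero _ ho)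

lemma duel_compliant : Compliant G 0 σ (duel G σ g v) := by
  intro k ho
  rw [duel_succ, if_pos ho, duelH_fst]

lemma duel_pcomp1 (k : ℕ) (ho : G.owner (duel G σ g v k) = 1) :
    duel G σ g v (k + 1) = g (duel G σ g v k) := by
  rw [duel_succ, if_neg (by rw [ho]; decide)]

end ZK

/-- In every parity game augmented with co-live edges, Player 0 has
a single positional strategy winning from every vertex of her winning region of
the augmented game `(G, Parity(ℙ), ψ_colive(Ec))`. -/
theorem stmt0 (V : Type) [Fintype V] (G : GameGraph V)
    (d : ℕ) (P : V → ℕ) (hP : ∀ v, P v ≤ d)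
    (Ec : Set (V × V)) (hEc : ∀ e ∈ Ec, G.E e.1 e.2 ∧ G.owner e.1 = 1) :
    ∃ σ : Strategy V, Positional σ ∧
      ∀ v ∈ WinRegion G 0 {ρ | psiColive Ec ρ → ParityWin P ρ},
        WinsFrom G 0 {ρ | psiColive Ec ρ → ParityWin P ρ} σ v := by
  classical
  have hsubuniv : ZK.Sub (ZK.Gaug G Ec) Set.univ := by
    intro x _
    obtain ⟨y, hy⟩ := (ZK.Gaug G Ec).exists_succ x
    exact ⟨y, Set.mem_univ y, hy⟩
  obtain ⟨W, f, hcover, hvalid, hclosed, hwin⟩ :=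
    ZK.zielonka (ZK.Gaug G Ec) (ZK.Paug d P Ec)
      (Set.univ : Set (V ⊕ V × V)).ncard Set.univ le_rfl hsubuniv
  set proj : V ⊕ V × V → V := fun x => match x with
    | .inl w => w
    | .inr e => e.2
    with hproj
  set σ : Strategy V := fun _ u => proj (f 0 (.inl u)) with hσ
  set g : V → V := fun u => proj (f 1 (.inl u)) with hg
  -- validity of the extracted strategies
  have hval0 : StratValid G 0 σ := by
    intro h u ho
    have hv := hvalid 0 (.inl u) (Set.mem_univ _) ho
    have hE := hv.2
    show G.E u (σ h u)
    rw [hσ]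
    rcases hf : f 0 (.inl u) with w | e
    · rw [hf] at hE
      obtain ⟨h1, _⟩ := hE
      simp only [hproj, hf]
      exact h1
    · rw [hf] at hE
      obtain ⟨h1, _, h3⟩ := hE
      simp only [hproj, hf]
      exact h1 ▸ h3
  have hval1 : ∀ u, G.owner u = 1 → G.E u (g u) := by
    intro u ho
    have hv := hvalid 1 (.inl u) (Set.mem_univ _) ho
    have hE := hv.2
    rw [hg]
    rcases hf : f 1 (.inl u) with w | e
    · rw [hf] at hE
      obtain ⟨h1, _⟩ := hE
      simp only [hproj, hf]
      exact h1
    · rw [hf] at hE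
      obtain ⟨h1, _, h3⟩ := hE
      simp only [hproj, hf]
      exact h1 ▸ h3
  refine ⟨σ, fun h h' u => rfl, ?_⟩
  intro v hv
  -- Step 1: the starting vertex lies in Player 0's region of the augmented game
  have hW0 : Sum.inl v ∈ W 0 := by
    by_contra hW0
    have hW1 : Sum.inl v ∈ W 1 := by
      have hm := Set.mem_univ (Sum.inl v : V ⊕ V × V)
      rw [← hcover] at hm
      exact hm.resolve_left hW0
    obtain ⟨σ₀, hσval, hσwin⟩ := hv
    have hplayρ : IsPlay G (ZK.duel G σ₀ g v) := ZK.duel_isPlay hσval hval1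
    have hρW : psiColive Ec (ZK.duel G σ₀ g v) →
        ParityWin P (ZK.duel G σ₀ g v) :=
      hσwin _ hplayρ ZK.duel_compliant ZK.duel_zero
    set ρ : ℕ → V := ZK.duel G σ₀ g v with hρ
    have hplay' : ZK.PlayIn (ZK.Gaug G Ec) Set.univ (ZK.liftPlay Ec ρ) :=
      fun n => ⟨Set.mem_univ _, ZK.liftPlay_isPlay hplayρ n⟩
    have hcomp' : ZK.PComp (ZK.Gaug G Ec) 1 (f 1) (ZK.liftPlay Ec ρ) := by
      intro n ho
      cases hcase : ZK.liftPlay Ec ρ n with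
      | inl x =>
        obtain ⟨k, hk, hkx⟩ := ZK.liftPlay_eq_inl hcase
        rw [hcase] at ho
        have hox : G.owner x = 1 := ho
        have hstep : ρ (k + 1) = g (ρ k) := ZK.duel_pcomp1 k
          (by show G.owner (ρ k) = 1; rw [hkx]; exact hox)
        have hv1 := hvalid 1 (.inl x) (Set.mem_univ _) hox
        have hE := hv1.2
        subst hk
        rcases hf1 : f 1 (.inl x) with w | e
        · rw [hf1] at hE
          obtain ⟨hEw, hnEc⟩ := hE
          have hval : ρ (k + 1) = w := by
            rw [hstep, hg]
            simp only [hproj, hkx, hf1]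
          have hnc : (ρ k, ρ (k + 1)) ∉ Ec := by rw [hkx, hval]; exact hnEc
          rw [show ZK.tr Ec ρ k + 1 = ZK.tr Ec ρ (k + 1) by rw [ZK.tr, if_neg hnc],
            ZK.liftPlay_tr, hval]
        · rw [hf1] at hE
          obtain ⟨h1, h2, _⟩ := hE
          have hval : ρ (k + 1) = e.2 := by
            rw [hstep, hg]
            simp only [hproj, hkx, hf1]
          have hc : (ρ k, ρ (k + 1)) ∈ Ec := by
            rw [hkx, hval, ← h1, Prod.mk.eta]
            exact h2
          rw [ZK.liftPlay_tr_succ k hc, hkx, hval, ← h1, Prod.mk.eta]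
      | inr e =>
        obtain ⟨k, hk, hc, he⟩ := ZK.liftPlay_eq_inr hcase
        have hv1 := hvalid 1 (.inr e) (Set.mem_univ _) rfl
        have hE := hv1.2
        subst hk
        rcases hf1 : f 1 (.inr e) with w | e'
        · rw [hf1] at hE
          have hE' : w = e.2 := hE
          rw [show ZK.tr Ec ρ k + 1 + 1 = ZK.tr Ec ρ (k + 1) by rw [ZK.tr, if_pos hc],
            ZK.liftPlay_tr, hE', he]
        · rw [hf1] at hE
          exact hE.elim
    have h00 : ZK.liftPlay Ec ρ 0 = Sum.inl v := by
      have := ZK.liftPlay_tr (Ec := Ec) (ρ := ρ) 0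
      rw [show ZK.tr Ec ρ 0 = 0 from rfl] at this
      rw [this]
      rfl
    have hw1 := hwin 1 _ hplay' hcomp' (by rw [h00]; exact hW1)
    rw [ZK.wins_one] at hw1
    apply hw1
    by_cases hcol : ∃ e ∈ Ec, EdgeInfOft ρ e
    · obtain ⟨e, heEc, hio⟩ := hcol
      refine ⟨.inr e, ZK.infOft_liftPlay_inr.mpr ⟨heEc, hio⟩, ?_, ?_⟩
      · show Even (if e ∈ Ec then 2 * d + 2 else 0)
        rw [if_pos heEc]
        exact ⟨d + 1, by ring⟩
      · intro w' hw'
        cases w' with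
        | inl x =>
          show P x ≤ (if e ∈ Ec then 2 * d + 2 else 0)
          rw [if_pos heEc]
          have := hP x
          omega
        | inr e' =>
          show (if e' ∈ Ec then 2 * d + 2 else 0) ≤ (if e ∈ Ec then 2 * d + 2 else 0)
          rw [if_pos heEc]
          split <;> omega
    · push_neg at hcol
      have hpsi : psiColive Ec ρ := fun e he => hcol e he
      obtain ⟨x, hx, hxe, hxm⟩ := hρW hpsi
      refine ⟨.inl x, ZK.infOft_liftPlay_inl.mpr hx, hxe, ?_⟩
      intro w' hw'
      cases w' with
      | inl w => exact hxm w (ZK.infOft_liftPlay_inl.mp hw')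
      | inr e =>
        obtain ⟨heEc, hio⟩ := ZK.infOft_liftPlay_inr.mp hw'
        exact absurd hio (hpsi e heEc)
  -- Step 2: the positional strategy σ wins from v
  refine ⟨hval0, ?_⟩
  intro ρ hplayρ hcompρ h0
  show psiColive Ec ρ → ParityWin P ρ
  intro hpsi
  have hplay' : ZK.PlayIn (ZK.Gaug G Ec) Set.univ (ZK.liftPlay Ec ρ) :=
    fun n => ⟨Set.mem_univ _, ZK.liftPlay_isPlay hplayρ n⟩
  have hcomp' : ZK.PComp (ZK.Gaug G Ec) 0 (f 0) (ZK.liftPlay Ec ρ) := by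
    intro n ho
    cases hcase : ZK.liftPlay Ec ρ n with
    | inl x =>
      obtain ⟨k, hk, hkx⟩ := ZK.liftPlay_eq_inl hcase
      rw [hcase] at ho
      have hox : G.owner x = 0 := ho
      have hstep : ρ (k + 1) = σ (List.ofFn fun j : Fin k => ρ j.val) (ρ k) :=
        hcompρ k (hkx ▸ hox)
      have hv0 := hvalid 0 (.inl x) (Set.mem_univ _) hox
      have hE := hv0.2
      subst hk
      rcases hf0 : f 0 (.inl x) with w | e
      · rw [hf0] at hE
        obtain ⟨hEw, hnEc⟩ := hE
        have hval : ρ (k + 1) = w := by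
          rw [hstep, hσ]
          simp only [hproj, hkx, hf0]
        have hnc : (ρ k, ρ (k + 1)) ∉ Ec := by rw [hkx, hval]; exact hnEc
        rw [show ZK.tr Ec ρ k + 1 = ZK.tr Ec ρ (k + 1) by rw [ZK.tr, if_neg hnc],
          ZK.liftPlay_tr, hval]
      · rw [hf0] at hE
        obtain ⟨h1, h2, _⟩ := hE
        have := (hEc e h2).2
        rw [h1, hox] at this
        exact absurd this (by decide)
    | inr e =>
      rw [hcase] at ho
      have : (1 : Fin 2) = 0 := ho
      exact absurd this (by decide)
  have h00 : ZK.liftPlay Ec ρ 0 = Sum.inl v := by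
    have := ZK.liftPlay_tr (Ec := Ec) (ρ := ρ) 0
    rw [show ZK.tr Ec ρ 0 = 0 from rfl] at this
    rw [this, h0]
  have hw0 := hwin 0 _ hplay' hcomp' (by rw [h00]; exact hW0)
  rw [ZK.wins_zero] at hw0
  obtain ⟨x', hio', hev', hmax'⟩ := hw0
  cases x' with
  | inr e =>
    obtain ⟨heEc, hioe⟩ := ZK.infOft_liftPlay_inr.mp hio'
    exact absurd hioe (hpsi e heEc)
  | inl x =>
    exact ⟨x, ZK.infOft_liftPlay_inl.mp hio', hev',
      fun w hw => hmax' (.inl w) (ZK.infOft_liftPlay_inl.mpr hw)⟩
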